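/- Let Λ = diag(λ₁,…,λ_M) with λ_k > 0, λ > 0, Δ an M×M symmetric matrix with δ := ‖Δ‖_op < 1/2, P̄ = Λ(Λ+λI_M)⁻¹, and B = (I_M + Δ + λΛ⁻¹)⁻¹. Then for every w ∈ ℝ^M: ‖Bw‖₂² ≤ (1 + 2δ)‖P̄w‖₂² + δ²(5 + 4δ + 4δ²)‖w‖₂², and ‖Bw‖₂² ≥ (1 − 2δ)‖P̄w‖₂² − δ²(5 + 4δ + 4δ²)‖w‖₂². -/
import Mathlib
open Matrix

noncomputable def opNorm {m n : Type*} [Fintype m] [Fintype n] [DecidableEq n]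
    (A : Matrix m n ℝ) : ℝ :=
  ‖LinearMap.toContinuousLinearMap (Matrix.toEuclideanLin A)‖

noncomputable def eunorm {m : Type*} [Fintype m] (v : m → ℝ) : ℝ :=
  Real.sqrt (∑ i, v i ^ 2)

lemma eunorm_eq_norm {m : Type*} [Fintype m] (v : m → ℝ) :
    eunorm v = ‖(WithLp.equiv 2 (m → ℝ)).symm v‖ := by
  rw [EuclideanSpace.norm_eq]
  simp [eunorm, sq_abs]

lemma eunorm_nonneg {m : Type*} [Fintype m] (v : m → ℝ) : 0 ≤ eunorm v :=
  Real.sqrt_nonneg _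

lemma eunorm_mulVec_le {m : Type*} [Fintype m] [DecidableEq m]
    (A : Matrix m m ℝ) (v : m → ℝ) :
    eunorm (A *ᵥ v) ≤ opNorm A * eunorm v := by
  rw [eunorm_eq_norm, eunorm_eq_norm]
  have h := (LinearMap.toContinuousLinearMap (Matrix.toEuclideanLin A)).le_opNorm
      ((WithLp.equiv 2 (m → ℝ)).symm v)
  have e : (LinearMap.toContinuousLinearMap (Matrix.toEuclideanLin A))
      ((WithLp.equiv 2 (m → ℝ)).symm v) = (WithLp.equiv 2 (m → ℝ)).symm (A *ᵥ v) := rfl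
  rw [e] at h
  exact h

lemma eunorm_sub_le {m : Type*} [Fintype m] (u v : m → ℝ) :
    eunorm u - eunorm v ≤ eunorm (u - v) := by
  rw [eunorm_eq_norm, eunorm_eq_norm, eunorm_eq_norm]
  simpa using norm_sub_norm_le ((WithLp.equiv 2 (m → ℝ)).symm u) ((WithLp.equiv 2 (m → ℝ)).symm v)

lemma eunorm_add_le {m : Type*} [Fintype m] (u v : m → ℝ) :
    eunorm (u + v) ≤ eunorm u + eunorm v := by
  rw [eunorm_eq_norm, eunorm_eq_norm, eunorm_eq_norm]
  simpa using norm_add_le ((WithLp.equiv 2 (m → ℝ)).symm u) ((WithLp.equiv 2 (m → ℝ)).symm v)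

lemma eunorm_neg {m : Type*} [Fintype m] (v : m → ℝ) : eunorm (-v) = eunorm v := by
  simp [eunorm]

lemma eunorm_sub_le' {m : Type*} [Fintype m] (u v : m → ℝ) :
    eunorm (u - v) ≤ eunorm u + eunorm v := by
  rw [sub_eq_add_neg]
  calc eunorm (u + -v) ≤ eunorm u + eunorm (-v) := eunorm_add_le _ _
    _ = eunorm u + eunorm v := by rw [eunorm_neg]

lemma eunorm_eq_zero {m : Type*} [Fintype m] {v : m → ℝ} (h : eunorm v = 0) : v = 0 := by
  rw [eunorm_eq_norm] at h
  have h2 := norm_eq_zero.mp h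
  simpa using congrArg (WithLp.equiv 2 (m → ℝ)) h2

lemma eunorm_diagonal_le {m : Type*} [Fintype m] [DecidableEq m]
    (c : m → ℝ) (hc : ∀ i, |c i| ≤ 1) (v : m → ℝ) :
    eunorm (Matrix.diagonal c *ᵥ v) ≤ eunorm v := by
  apply Real.sqrt_le_sqrt
  apply Finset.sum_le_sum
  intro i _
  rw [Matrix.mulVec_diagonal, mul_pow]
  have h1 : (c i) ^ 2 ≤ 1 := by nlinarith [hc i, abs_nonneg (c i), sq_abs (c i)]
  nlinarith [sq_nonneg (v i)]

lemma diagonal_eq_one {m : Type*} [Fintype m] [DecidableEq m] {d : m → ℝ}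
    (h : ∀ i, d i = 1) : Matrix.diagonal d = 1 := by
  have hd : d = (1 : m → ℝ) := funext h
  rw [hd]
  exact Matrix.diagonal_one

lemma smul_one_diag {m : Type*} [Fintype m] [DecidableEq m] (l : ℝ) :
    l • (1 : Matrix m m ℝ) = Matrix.diagonal (fun _ => l) := by
  rw [← Matrix.diagonal_one, ← Matrix.diagonal_smul]
  exact congrArg Matrix.diagonal (funext fun k => by simp)

set_option maxHeartbeats 2000000

theorem stmt_8 (M : ℕ) (lam : Fin M → ℝ) (hlam : ∀ k, 0 < lam k) (l : ℝ) (hl : 0 < l)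
    (Δ : Matrix (Fin M) (Fin M) ℝ) (hsym : Δᵀ = Δ) (hδ : opNorm Δ < 1 / 2) :
    let δ : ℝ := opNorm Δ
    let Λ : Matrix (Fin M) (Fin M) ℝ := Matrix.diagonal lam
    let P : Matrix (Fin M) (Fin M) ℝ := Λ * (Λ + l • 1)⁻¹
    let B : Matrix (Fin M) (Fin M) ℝ := (1 + Δ + l • Λ⁻¹)⁻¹
    ∀ w : Fin M → ℝ,
      eunorm (B *ᵥ w) ^ 2
          ≤ (1 + 2 * δ) * eunorm (P *ᵥ w) ^ 2
            + δ ^ 2 * (5 + 4 * δ + 4 * δ ^ 2) * eunorm w ^ 2 ∧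
      eunorm (B *ᵥ w) ^ 2
          ≥ (1 - 2 * δ) * eunorm (P *ᵥ w) ^ 2
            - δ ^ 2 * (5 + 4 * δ + 4 * δ ^ 2) * eunorm w ^ 2 := by
  intro δ Λ P B w
  have hδ0 : (0:ℝ) ≤ δ := norm_nonneg _
  have hδ2 : δ < 1/2 := hδ
  have hlam0 : ∀ k, lam k ≠ 0 := fun k => (hlam k).ne'
  have hll0 : ∀ k, 0 < lam k + l := fun k => by have := hlam k; positivity
  have hll : ∀ k, lam k + l ≠ 0 := fun k => (hll0 k).ne'
  -- diagonal computations
  have hΛ1 : Λ + l • (1 : Matrix (Fin M) (Fin M) ℝ)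
      = Matrix.diagonal (fun k => lam k + l) := by
    show Matrix.diagonal lam + l • (1 : Matrix (Fin M) (Fin M) ℝ) = _
    rw [smul_one_diag, Matrix.diagonal_add]
  have hP : P = Matrix.diagonal (fun k => lam k * (lam k + l)⁻¹) := by
    show Λ * (Λ + l • 1)⁻¹ = _
    have hinv : (Λ + l • (1 : Matrix (Fin M) (Fin M) ℝ))⁻¹
        = Matrix.diagonal (fun k => (lam k + l)⁻¹) := by
      apply Matrix.inv_eq_right_inv
      rw [hΛ1, Matrix.diagonal_mul_diagonal]
      exact diagonal_eq_one fun k => mul_inv_cancel₀ (hll k)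
    rw [hinv]
    show Matrix.diagonal lam * _ = _
    rw [Matrix.diagonal_mul_diagonal]
  have hΛinv : Λ⁻¹ = Matrix.diagonal (fun k => (lam k)⁻¹) := by
    apply Matrix.inv_eq_right_inv
    show Matrix.diagonal lam * _ = _
    rw [Matrix.diagonal_mul_diagonal]
    exact diagonal_eq_one fun k => mul_inv_cancel₀ (hlam0 k)
  have hPle : ∀ v : Fin M → ℝ, eunorm (P *ᵥ v) ≤ eunorm v := by
    intro v
    rw [hP]
    apply eunorm_diagonal_le
    intro k
    have h1 : 0 < lam k + l := hll0 k
    have h2 : 0 < lam k := hlam k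
    rw [abs_of_pos (by positivity), mul_inv_le_iff₀ h1]
    linarith
  have hΔle : ∀ v : Fin M → ℝ, eunorm (Δ *ᵥ v) ≤ δ * eunorm v := fun v =>
    eunorm_mulVec_le Δ v
  -- invertibility of C = 1 + P * Δ
  set C : Matrix (Fin M) (Fin M) ℝ := 1 + P * Δ with hCdef
  have hCmv : ∀ v : Fin M → ℝ, C *ᵥ v = v + P *ᵥ (Δ *ᵥ v) := by
    intro v
    rw [hCdef, Matrix.add_mulVec, Matrix.one_mulVec, Matrix.mulVec_mulVec]
  have hCinj : Function.Injective C.mulVec := by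
    intro x y hxy
    have hz : C *ᵥ (x - y) = 0 := by
      rw [Matrix.mulVec_sub, hxy, sub_self]
    rw [hCmv] at hz
    have hv : x - y = -(P *ᵥ (Δ *ᵥ (x - y))) := by
      rw [eq_neg_iff_add_eq_zero]
      linear_combination (norm := module) hz
    have h1 : eunorm (x - y) ≤ δ * eunorm (x - y) := by
      calc eunorm (x - y) = eunorm (-(P *ᵥ (Δ *ᵥ (x - y)))) := by rw [← hv]
        _ = eunorm (P *ᵥ (Δ *ᵥ (x - y))) := eunorm_neg _
        _ ≤ eunorm (Δ *ᵥ (x - y)) := hPle _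
        _ ≤ δ * eunorm (x - y) := hΔle _
    have h2 : eunorm (x - y) = 0 := by nlinarith [eunorm_nonneg (x - y)]
    exact sub_eq_zero.mp (eunorm_eq_zero h2)
  have hC : IsUnit C := Matrix.mulVec_injective_iff_isUnit.mp hCinj
  have hCC : C * C⁻¹ = 1 := Matrix.mul_nonsing_inv C ((Matrix.isUnit_iff_isUnit_det C).mp hC)
  -- A = D * C
  set D : Matrix (Fin M) (Fin M) ℝ := Matrix.diagonal (fun k => (lam k)⁻¹ * (lam k + l))
    with hDdef
  have hDP : D * P = 1 := by
    rw [hP, hDdef, Matrix.diagonal_mul_diagonal]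
    refine diagonal_eq_one fun k => ?_
    have h1 := hlam0 k
    have h2 := hll k
    field_simp
  have hD : D = 1 + l • Λ⁻¹ := by
    rw [hΛinv, hDdef, ← Matrix.diagonal_one, ← Matrix.diagonal_smul, Matrix.diagonal_add]
    refine congrArg Matrix.diagonal (funext fun k => ?_)
    have h1 := hlam0 k
    simp only [Pi.smul_apply, smul_eq_mul, Pi.one_apply]
    field_simp
  have hA : 1 + Δ + l • Λ⁻¹ = D * C := by
    rw [hCdef, mul_add, mul_one, ← mul_assoc, hDP, hD]
    noncomm_ring
  have hB : B = C⁻¹ * P := by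
    show (1 + Δ + l • Λ⁻¹)⁻¹ = C⁻¹ * P
    apply Matrix.inv_eq_right_inv
    rw [hA, mul_assoc, ← mul_assoc C, hCC, one_mul, hDP]
  have hCB : C * B = P := by
    rw [hB, ← mul_assoc, hCC, one_mul]
  -- key identity at the matrix level
  have hid1 : B = P - P * Δ * B := by
    have h := hCB
    rw [hCdef, add_mul, one_mul] at h
    rw [eq_sub_iff_add_eq]
    exact h
  clear_value B P Λ δ
  clear hCdef hCmv hCinj hC hCC hDP hD hA hB hCB hΛ1 hP hΛinv hDdef
  -- vector-level identity
  have hu : B *ᵥ w = P *ᵥ w - P *ᵥ (Δ *ᵥ (B *ᵥ w)) := by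
    conv_lhs => rw [hid1]
    rw [Matrix.sub_mulVec]
    simp only [Matrix.mulVec_mulVec, mul_assoc]
  -- abbreviations
  set a := eunorm (P *ᵥ w) with hadef
  set b := eunorm (B *ᵥ w) with hbdef
  set nn := eunorm w with hndef
  have ha0 : 0 ≤ a := eunorm_nonneg _
  have hb0 : 0 ≤ b := eunorm_nonneg _
  have hn0 : 0 ≤ nn := eunorm_nonneg _
  have han : a ≤ nn := hPle w
  -- b ≤ a + δ b, hence b ≤ 2 nn
  have hble : b ≤ a + δ * b := by
    calc b = eunorm (P *ᵥ w - P *ᵥ (Δ *ᵥ (B *ᵥ w))) := congrArg eunorm hu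
      _ ≤ eunorm (P *ᵥ w) + eunorm (P *ᵥ (Δ *ᵥ (B *ᵥ w))) := eunorm_sub_le' _ _
      _ ≤ a + eunorm (Δ *ᵥ (B *ᵥ w)) := by linarith [hPle (Δ *ᵥ (B *ᵥ w))]
      _ ≤ a + δ * b := by linarith [hΔle (B *ᵥ w)]
  have hb2n : b ≤ 2 * nn := by nlinarith
  -- second-order expansion of the difference
  have hstep : Δ *ᵥ (B *ᵥ w) = Δ *ᵥ (P *ᵥ w) - Δ *ᵥ (P *ᵥ (Δ *ᵥ (B *ᵥ w))) := by
    rw [← Matrix.mulVec_sub]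
    exact congrArg (Δ *ᵥ ·) hu
  have hq : B *ᵥ w - P *ᵥ w = -(P *ᵥ (Δ *ᵥ (B *ᵥ w))) := by
    conv_lhs => rw [hu]
    abel
  have hq2 : P *ᵥ (Δ *ᵥ (B *ᵥ w))
      = P *ᵥ (Δ *ᵥ (P *ᵥ w)) - P *ᵥ (Δ *ᵥ (P *ᵥ (Δ *ᵥ (B *ᵥ w)))) := by
    conv_lhs => rw [hstep, Matrix.mulVec_sub]
  have hdiff : eunorm (B *ᵥ w - P *ᵥ w) ≤ δ * a + δ ^ 2 * b := by
    rw [hq, eunorm_neg, hq2]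
    have t1 : eunorm (P *ᵥ (Δ *ᵥ (P *ᵥ w))) ≤ δ * a := by
      calc eunorm (P *ᵥ (Δ *ᵥ (P *ᵥ w))) ≤ eunorm (Δ *ᵥ (P *ᵥ w)) := hPle _
        _ ≤ δ * a := hΔle _
    have t2 : eunorm (P *ᵥ (Δ *ᵥ (P *ᵥ (Δ *ᵥ (B *ᵥ w))))) ≤ δ ^ 2 * b := by
      calc eunorm (P *ᵥ (Δ *ᵥ (P *ᵥ (Δ *ᵥ (B *ᵥ w)))))
          ≤ eunorm (Δ *ᵥ (P *ᵥ (Δ *ᵥ (B *ᵥ w)))) := hPle _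
        _ ≤ δ * eunorm (P *ᵥ (Δ *ᵥ (B *ᵥ w))) := hΔle _
        _ ≤ δ * (δ * b) := by
            have h3 := hPle (Δ *ᵥ (B *ᵥ w))
            have h4 := hΔle (B *ᵥ w)
            nlinarith
        _ = δ ^ 2 * b := by ring
    calc eunorm (P *ᵥ (Δ *ᵥ (P *ᵥ w)) - P *ᵥ (Δ *ᵥ (P *ᵥ (Δ *ᵥ (B *ᵥ w)))))
        ≤ eunorm (P *ᵥ (Δ *ᵥ (P *ᵥ w)))
          + eunorm (P *ᵥ (Δ *ᵥ (P *ᵥ (Δ *ᵥ (B *ᵥ w))))) := eunorm_sub_le' _ _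
      _ ≤ δ * a + δ ^ 2 * b := by linarith
  have hup : b - a ≤ δ * a + δ ^ 2 * b := by
    have := eunorm_sub_le (B *ᵥ w) (P *ᵥ w)
    linarith
  have hdown : a - b ≤ δ * a + δ ^ 2 * b := by
    have h5 := eunorm_sub_le (P *ᵥ w) (B *ᵥ w)
    have h6 : eunorm (P *ᵥ w - B *ᵥ w) = eunorm (B *ᵥ w - P *ᵥ w) := by
      rw [← eunorm_neg (B *ᵥ w - P *ᵥ w), neg_sub]
    linarith
  have hd2b : δ ^ 2 * b ≤ 2 * δ ^ 2 * nn := by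
    nlinarith [mul_nonneg (sq_nonneg δ) (by linarith : (0:ℝ) ≤ 2 * nn - b)]
  clear_value a b nn
  clear_value C D
  clear hadef hbdef hndef hdiff hq hq2 hstep hu hid1 hPle hΔle hδ hsym hlam hlam0 hll0 hll hl
  clear w B P Λ D C Δ lam l M
  constructor
  · -- upper bound
    have hble2 : b ≤ (1 + δ) * a + 2 * δ ^ 2 * nn := by nlinarith
    have hrhs0 : 0 ≤ (1 + δ) * a + 2 * δ ^ 2 * nn := by positivity
    have hsq : b ^ 2 ≤ ((1 + δ) * a + 2 * δ ^ 2 * nn) ^ 2 := by nlinarith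
    nlinarith [mul_nonneg (mul_nonneg hδ0 hδ0) (mul_nonneg (sub_nonneg.mpr han) hn0),
      mul_nonneg (mul_nonneg (mul_nonneg hδ0 hδ0) hδ0) (mul_nonneg (sub_nonneg.mpr han) hn0),
      mul_nonneg (mul_nonneg hδ0 hδ0) (mul_nonneg (sub_nonneg.mpr han) (by linarith : (0:ℝ) ≤ nn + a))]
  · -- lower bound
    have hbge : (1 - δ) * a - 2 * δ ^ 2 * nn ≤ b := by nlinarith
    by_cases ht : 0 ≤ (1 - δ) * a - 2 * δ ^ 2 * nn
    · have hsq : ((1 - δ) * a - 2 * δ ^ 2 * nn) ^ 2 ≤ b ^ 2 := by nlinarith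
      nlinarith [mul_nonneg (mul_nonneg hδ0 hδ0) (mul_nonneg (sub_nonneg.mpr han) hn0),
        mul_nonneg (mul_nonneg (mul_nonneg hδ0 hδ0) hδ0) (mul_nonneg (sub_nonneg.mpr han) hn0),
        sq_nonneg (δ * a), sq_nonneg (δ * nn), sq_nonneg (δ * δ * nn)]
    · push_neg at ht
      have h7 : (1 - δ) * a ≤ 2 * δ ^ 2 * nn := by linarith
      have h8 : ((1 - δ) * a) ^ 2 ≤ (2 * δ ^ 2 * nn) ^ 2 := by
        have h9 : 0 ≤ (1 - δ) * a := by nlinarith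
        nlinarith
      have hδsq : δ ^ 2 ≤ 1 / 4 := by nlinarith
      nlinarith [sq_nonneg b, sq_nonneg (δ * nn), sq_nonneg a, sq_nonneg (δ * δ * nn), sq_nonneg (δ * a)]
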